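/- (Björner's theorem on subword order.) For words u ≤ w in subword order, μ(u,w) = (−1)^{|w|−|u|} · NE(u,w). -/

import Mathlib

attribute [local instance] Classical.propDecidable

noncomputable instance {α : Type*} [Fintype α] : Fintype (WithBot α) :=
  inferInstanceAs (Fintype (Option α))
noncomputable instance {α : Type*} [Fintype α] : Fintype (WithTop α) :=
  inferInstanceAs (Fintype (Option α))

/-- The Möbius function of a finite partial order. -/
noncomputable def mob {α : Type*} [Preorder α] [Fintype α] (a b : α) : ℤ :=
  letI := Classical.decEq α
  letI : @DecidableRel α α (· ≤ ·) := Classical.decRel _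
  letI : @DecidableRel α α (· < ·) := Classical.decRel _
  letI : LocallyFiniteOrder α := Fintype.toLocallyFiniteOrder
  IncidenceAlgebra.mu ℤ a b

/-- The bounded poset obtained by adjoining a new minimum `0̂` and maximum `1̂`. -/
abbrev Bd (α : Type*) := WithBot (WithTop α)

/-- The Möbius number `μ(0̂,1̂)` of a finite poset with new bounds adjoined. -/
noncomputable def mobHat (α : Type*) [Preorder α] [Fintype α] : ℤ :=
  mob (⊥ : Bd α) ⊤

/-- The subsequence of the word `w` indexed by the set of positions `S`,
taken in increasing position order. -/
def subIdx {A : Type*} (w : List A) (S : Finset (Fin w.length)) : List A :=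
  (S.sort (· ≤ ·)).map (w.get ·)

/-- The predecessor position. -/
def predPos {n : ℕ} (p : Fin n) : Fin n :=
  ⟨p.1 - 1, lt_of_le_of_lt (Nat.sub_le p.1 1) p.2⟩

/-- `p` lies in the tail of a run of `w`: `p` is not the first position and `w` carries
equal letters at positions `p − 1` and `p` (so that `p` and `p − 1` lie in the same
maximal set of consecutive positions carrying equal letters). -/
def tailPosW {A : Type*} (w : List A) (p : Fin w.length) : Prop :=
  0 < p.1 ∧ w.get p = w.get (predPos p)

/-- A normal embedding of `u` in `w`: a set of positions whose indexed subsequence is `u`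
and which contains every position lying in the tail of some run of `w`. -/
def IsNormalEmbW {A : Type*} (u w : List A) (S : Finset (Fin w.length)) : Prop :=
  subIdx w S = u ∧ ∀ p : Fin w.length, tailPosW w p → p ∈ S

/-- `NE(u,w)`: the number of normal embeddings of `u` in `w`. -/
noncomputable def wordNE {A : Type*} (u w : List A) : ℕ :=
  (Finset.univ.filter fun S : Finset (Fin w.length) => IsNormalEmbW u w S).card

/-- A set of positions of `w` is representative if within every run of `w` its positions
form a suffix of the run. -/
def ReprW {A : Type*} (w : List A) (S : Finset (Fin w.length)) : Prop :=
  ∀ p : Fin w.length, tailPosW w p → predPos p ∈ S → p ∈ S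

/-- The poset `R*(u,w)` of representative proper subsets `S ⊊ {1,…,|w|}` of positions
such that `u` is a subsequence of `w|_S`, ordered by inclusion. -/
abbrev RstarW {A : Type*} (u w : List A) :=
  {S : Finset (Fin w.length) // S ≠ Finset.univ ∧ ReprW w S ∧ u.Sublist (subIdx w S)}

section BjornerAux

variable {A : Type*}

theorem List.eq_of_perm_of_sorted {α : Type*} {r : α → α → Prop} [Std.Antisymm r]
    {l₁ l₂ : List α} (hp : l₁.Perm l₂) (h₁ : l₁.Pairwise r) (h₂ : l₂.Pairwise r) : l₁ = l₂ :=
  List.Perm.eq_of_pairwise' h₁ h₂ hp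

lemma sort_map {n m : ℕ} (f : Fin n ↪ Fin m) (hf : ∀ i j, i ≤ j → f i ≤ f j)
    (S : Finset (Fin n)) :
    (S.map f).sort (· ≤ ·) = (S.sort (· ≤ ·)).map f := by
  apply List.eq_of_perm_of_sorted (r := (· ≤ · : Fin m → Fin m → Prop))
  · rw [← Multiset.coe_eq_coe]
    push_cast [Finset.sort_eq]
    rw [Finset.map_val, ← Finset.sort_eq S (· ≤ ·)]
    exact (Multiset.map_coe _ _)
  · exact Finset.pairwise_sort _ _
  · exact List.Pairwise.map f (fun a b h => hf a b h) (Finset.pairwise_sort S _)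

lemma sort_insert_max {m : ℕ} (S : Finset (Fin m)) (p : Fin m) (h : ∀ q ∈ S, q < p) :
    (insert p S).sort (· ≤ ·) = S.sort (· ≤ ·) ++ [p] := by
  have hp : p ∉ S := fun hp => lt_irrefl p (h p hp)
  apply List.eq_of_perm_of_sorted (r := (· ≤ · : Fin m → Fin m → Prop))
  · rw [← Multiset.coe_eq_coe]
    push_cast [Finset.sort_eq]
    rw [Finset.insert_val, Multiset.ndinsert_of_notMem hp, ← Finset.sort_eq S (· ≤ ·)]
    rw [Multiset.cons_coe, Multiset.coe_eq_coe]
    exact (List.perm_append_singleton _ _).symm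
  · exact Finset.pairwise_sort _ _
  · rw [List.pairwise_append]
    refine ⟨Finset.pairwise_sort _ _, List.pairwise_singleton _ _, ?_⟩
    intro a ha b hb
    rw [List.mem_singleton] at hb
    subst hb
    exact le_of_lt (h a ((Finset.mem_sort _).1 ha))

lemma subIdx_sublist (w : List A) (S : Finset (Fin w.length)) : (subIdx w S).Sublist w :=
  List.map_getElem_sublist (Finset.sortedLT_sort S).pairwise

lemma length_subIdx (w : List A) (S : Finset (Fin w.length)) :
    (subIdx w S).length = S.card := by simp [subIdx]

lemma subIdx_univ (w : List A) : subIdx w Finset.univ = w := by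
  simp [subIdx, Fin.sort_univ]

lemma wordNE_of_not_sublist {u w : List A} (h : ¬ u.Sublist w) : wordNE u w = 0 := by
  rw [wordNE, Finset.card_eq_zero, Finset.filter_eq_empty_iff]
  rintro S - ⟨h1, -⟩
  exact h (h1 ▸ subIdx_sublist w S)

lemma wordNE_self (u : List A) : wordNE u u = 1 := by
  rw [wordNE]
  convert Finset.card_singleton (Finset.univ : Finset (Fin u.length))
  rw [Finset.eq_singleton_iff_unique_mem]
  constructor
  · exact Finset.mem_filter.2 ⟨Finset.mem_univ _, subIdx_univ u, fun p _ => Finset.mem_univ p⟩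
  · rintro S hS
    rw [Finset.mem_filter] at hS
    apply Finset.eq_univ_of_card
    have := length_subIdx u S
    rw [hS.2.1] at this
    simp [← this]

lemma wordNE_nil (u : List A) : wordNE u [] = if u = [] then 1 else 0 := by
  split_ifs with h
  · subst h
    rw [wordNE]
    convert Finset.card_singleton (∅ : Finset (Fin ([] : List A).length))
    rw [Finset.eq_singleton_iff_unique_mem]
    constructor
    · refine Finset.mem_filter.2 ⟨Finset.mem_univ _, ⟨by simp [subIdx], ?_⟩⟩
      intro p; exact absurd p.2 (by simp)
    · intro S _
      exact Finset.eq_empty_of_forall_notMem (fun p => absurd p.2 (by simp))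
  · exact wordNE_of_not_sublist (by simpa using h)

namespace BjAux

variable (c : List A) (a : A)

def cEmb : Fin c.length ↪ Fin (c ++ [a]).length := Fin.castLEEmb (by simp)

def cP0 : Fin (c ++ [a]).length := ⟨c.length, by simp⟩

lemma cEmb_coe (i : Fin c.length) : (cEmb c a i : ℕ) = (i : ℕ) := rfl

lemma cEmb_mono : ∀ i j : Fin c.length, i ≤ j → cEmb c a i ≤ cEmb c a j := by
  intro i j h
  rw [← Fin.val_fin_le] at h ⊢
  simpa [cEmb_coe] using h

lemma cEmb_lt (i : Fin c.length) : cEmb c a i < cP0 c a := by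
  rw [← Fin.val_fin_lt, cEmb_coe]
  exact i.2

lemma cEmb_ne (i : Fin c.length) : cEmb c a i ≠ cP0 c a := ne_of_lt (cEmb_lt c a i)

lemma get_cEmb (i : Fin c.length) : (c ++ [a]).get (cEmb c a i) = c.get i := by
  simp only [List.get_eq_getElem, cEmb_coe]
  exact List.getElem_append_left i.2

lemma get_cP0 : (c ++ [a]).get (cP0 c a) = a :=
  List.getElem_concat_length (l := c) (a := a) rfl _

lemma cEmb_surj (q : Fin (c ++ [a]).length) (hq : q ≠ cP0 c a) :
    ∃ i, cEmb c a i = q := by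
  have h1 : (q : ℕ) < c.length + 1 := by
    have := q.2; simpa using this
  have h2 : (q : ℕ) ≠ c.length := fun h => hq (Fin.ext h)
  exact ⟨⟨q, by omega⟩, Fin.ext rfl⟩

lemma predPos_cEmb (i : Fin c.length) :
    predPos (cEmb c a i) = cEmb c a (predPos i) := Fin.ext rfl

lemma tail_cEmb (i : Fin c.length) :
    tailPosW (c ++ [a]) (cEmb c a i) ↔ tailPosW c i := by
  unfold tailPosW
  rw [predPos_cEmb, get_cEmb, get_cEmb, cEmb_coe]

lemma tail_cP0 : tailPosW (c ++ [a]) (cP0 c a) ↔ c.getLast? = some a := by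
  rcases eq_or_ne c [] with rfl | hc
  · simp [tailPosW, cP0]
  · have h0 : 0 < c.length := List.length_pos_iff.2 hc
    have hpp : predPos (cP0 c a) = cEmb c a ⟨c.length - 1, by omega⟩ := Fin.ext rfl
    rw [tailPosW, hpp, get_cEmb, get_cP0, List.getLast?_eq_getLast hc]
    simp only [List.getLast_eq_getElem, List.get_eq_getElem, Option.some_inj]
    constructor
    · rintro ⟨-, h⟩; exact h.symm
    · intro h; exact ⟨h0, h.symm⟩

lemma subIdx_map (S : Finset (Fin c.length)) :
    subIdx (c ++ [a]) (S.map (cEmb c a)) = subIdx c S := by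
  rw [subIdx, subIdx, sort_map (cEmb c a) (cEmb_mono c a), List.map_map]
  exact List.map_congr_left (fun i _ => get_cEmb c a i)

lemma subIdx_insert_map (S : Finset (Fin c.length)) :
    subIdx (c ++ [a]) (insert (cP0 c a) (S.map (cEmb c a))) = subIdx c S ++ [a] := by
  rw [subIdx, sort_insert_max _ _ ?hmax, List.map_append]
  · rw [← subIdx, subIdx_map]
    have h := get_cP0 c a
    simp only [List.get_eq_getElem] at h
    simp [h]
  · intro q hq
    rw [Finset.mem_map] at hq
    obtain ⟨i, -, rfl⟩ := hq
    exact cEmb_lt c a i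

lemma map_filter_eq_erase (S : Finset (Fin (c ++ [a]).length)) :
    (Finset.univ.filter (fun i => cEmb c a i ∈ S)).map (cEmb c a) = S.erase (cP0 c a) := by
  ext q
  simp only [Finset.mem_map, Finset.mem_filter, Finset.mem_univ, true_and, Finset.mem_erase]
  constructor
  · rintro ⟨i, hi, rfl⟩
    exact ⟨cEmb_ne c a i, hi⟩
  · rintro ⟨hq, hqS⟩
    obtain ⟨i, rfl⟩ := cEmb_surj c a q hq
    exact ⟨i, hqS, rfl⟩

lemma eq_map_of_not_mem (S : Finset (Fin (c ++ [a]).length)) (h : cP0 c a ∉ S) :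
    S = (Finset.univ.filter (fun i => cEmb c a i ∈ S)).map (cEmb c a) := by
  rw [map_filter_eq_erase, Finset.erase_eq_of_notMem h]

lemma eq_insert_map_of_mem (S : Finset (Fin (c ++ [a]).length)) (h : cP0 c a ∈ S) :
    S = insert (cP0 c a) ((Finset.univ.filter (fun i => cEmb c a i ∈ S)).map (cEmb c a)) := by
  rw [map_filter_eq_erase, Finset.insert_erase h]

end BjAux

open BjAux in
lemma wordNE_concat (u c : List A) (a : A) :
    wordNE u (c ++ [a]) =
      (if u.getLast? = some a then wordNE u.dropLast c else 0) +
      (if c.getLast? = some a then 0 else wordNE u c) := by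
  classical
  set s := Finset.univ.filter (fun S : Finset (Fin (c ++ [a]).length) =>
    IsNormalEmbW u (c ++ [a]) S) with hs
  have hsplit := Finset.card_filter_add_card_filter_not
    (s := s) (fun S => cP0 c a ∈ S)
  rw [wordNE, ← hsplit]
  congr 1
  · -- part A : last position used
    by_cases hu : u.getLast? = some a
    · rw [if_pos hu]
      obtain ⟨u', rfl⟩ := List.getLast?_eq_some_iff.1 hu
      rw [List.dropLast_concat, wordNE]
      refine Finset.card_bij'
        (fun S _ => Finset.univ.filter (fun i => cEmb c a i ∈ S))
        (fun T _ => insert (cP0 c a) (T.map (cEmb c a))) ?_ ?_ ?_ ?_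
      · intro S hS
        rw [Finset.mem_filter] at hS
        obtain ⟨hS1, hp0⟩ := hS
        rw [hs, Finset.mem_filter] at hS1
        obtain ⟨-, hsub, htail⟩ := hS1
        set T := Finset.univ.filter (fun i => cEmb c a i ∈ S) with hT
        have hST := eq_insert_map_of_mem c a S hp0
        refine Finset.mem_filter.2 ⟨Finset.mem_univ _, ?_, ?_⟩
        · have : subIdx c T ++ [a] = u' ++ [a] := by
            rw [← subIdx_insert_map, ← hST, hsub]
          exact List.append_cancel_right this
        · intro i hti
          refine Finset.mem_filter.2 ⟨Finset.mem_univ _, ?_⟩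
          exact htail _ ((tail_cEmb c a i).2 hti)
      · intro T hT
        rw [Finset.mem_filter] at hT
        obtain ⟨-, hsub, htail⟩ := hT
        refine Finset.mem_filter.2 ⟨?_, Finset.mem_insert_self _ _⟩
        rw [hs, Finset.mem_filter]
        refine ⟨Finset.mem_univ _, ?_, ?_⟩
        · rw [subIdx_insert_map, hsub]
        · intro q htq
          rcases eq_or_ne q (cP0 c a) with rfl | hq
          · exact Finset.mem_insert_self _ _
          · obtain ⟨i, rfl⟩ := cEmb_surj c a q hq
            exact Finset.mem_insert_of_mem
              (Finset.mem_map_of_mem _ (htail i ((tail_cEmb c a i).1 htq)))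
      · intro S hS
        rw [Finset.mem_filter] at hS
        exact (eq_insert_map_of_mem c a S hS.2).symm
      · intro T hT
        ext i
        simp only [Finset.mem_filter, Finset.mem_univ, true_and, Finset.mem_insert,
          Finset.mem_map]
        constructor
        · rintro (h | ⟨j, hj, hji⟩)
          · exact absurd h (cEmb_ne c a i)
          · rwa [← (cEmb c a).injective hji]
        · intro h
          exact Or.inr ⟨i, h, rfl⟩
    · rw [if_neg hu, Finset.card_eq_zero, Finset.filter_eq_empty_iff]
      intro S hS hp0
      rw [hs, Finset.mem_filter] at hS
      obtain ⟨-, hsub, -⟩ := hS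
      apply hu
      rw [← hsub, eq_insert_map_of_mem c a S hp0, subIdx_insert_map]
      exact List.getLast?_concat
  · -- part B : last position unused
    by_cases hc : c.getLast? = some a
    · rw [if_pos hc, Finset.card_eq_zero, Finset.filter_eq_empty_iff]
      intro S hS hp0
      rw [hs, Finset.mem_filter] at hS
      exact hp0 (hS.2.2 _ ((tail_cP0 c a).2 hc))
    · rw [if_neg hc, wordNE]
      refine Finset.card_bij'
        (fun S _ => Finset.univ.filter (fun i => cEmb c a i ∈ S))
        (fun T _ => T.map (cEmb c a)) ?_ ?_ ?_ ?_
      · intro S hS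
        rw [Finset.mem_filter] at hS
        obtain ⟨hS1, hp0⟩ := hS
        rw [hs, Finset.mem_filter] at hS1
        obtain ⟨-, hsub, htail⟩ := hS1
        have hST := eq_map_of_not_mem c a S hp0
        refine Finset.mem_filter.2 ⟨Finset.mem_univ _, ?_, ?_⟩
        · rw [← subIdx_map c a, ← hST, hsub]
        · intro i hti
          refine Finset.mem_filter.2 ⟨Finset.mem_univ _, ?_⟩
          exact htail _ ((tail_cEmb c a i).2 hti)
      · intro T hT
        rw [Finset.mem_filter] at hT
        obtain ⟨-, hsub, htail⟩ := hT
        refine Finset.mem_filter.2 ⟨?_, ?_⟩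
        · rw [hs, Finset.mem_filter]
          refine ⟨Finset.mem_univ _, ?_, ?_⟩
          · rw [subIdx_map, hsub]
          · intro q htq
            rcases eq_or_ne q (cP0 c a) with rfl | hq
            · exact absurd ((tail_cP0 c a).1 htq) hc
            · obtain ⟨i, rfl⟩ := cEmb_surj c a q hq
              exact Finset.mem_map_of_mem _ (htail i ((tail_cEmb c a i).1 htq))
        · intro hp0
          rw [Finset.mem_map] at hp0
          obtain ⟨i, -, hi⟩ := hp0
          exact cEmb_ne c a i hi
      · intro S hS
        rw [Finset.mem_filter] at hS
        exact (eq_map_of_not_mem c a S hS.2).symm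
      · intro T hT
        ext i
        simp only [Finset.mem_filter, Finset.mem_univ, true_and, Finset.mem_map]
        constructor
        · rintro ⟨j, hj, hji⟩
          rwa [← (cEmb c a).injective hji]
        · intro h
          exact ⟨i, h, rfl⟩

noncomputable def Gsum (u w : List A) : ℤ :=
  ∑ c ∈ w.sublists.toFinset, (-1) ^ c.length * (wordNE u c : ℤ)

lemma sublists_toFinset_concat (v : List A) (a : A) :
    (v ++ [a]).sublists.toFinset =
      (v.sublists.toFinset.filter (fun c => ¬ c.getLast? = some a)) ∪
        (v.sublists.toFinset.image (· ++ [a])) := by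
  ext c
  have hmem : c.Sublist (v ++ [a]) ↔ c.Sublist v ∨ ∃ c', c'.Sublist v ∧ c' ++ [a] = c := by
    rw [← List.mem_sublists, List.sublists_concat, List.mem_append, List.mem_map]
    simp [List.mem_sublists]
  simp only [List.mem_toFinset, List.mem_sublists, Finset.mem_union, Finset.mem_filter,
    Finset.mem_image, hmem]
  constructor
  · rintro (h | ⟨c', hc', rfl⟩)
    · by_cases hl : c.getLast? = some a
      · obtain ⟨c'', rfl⟩ := List.getLast?_eq_some_iff.1 hl
        exact Or.inr ⟨c'', ((c''.dropLast_concat (b := a)) ▸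
          (c'' ++ [a]).dropLast_sublist).trans h, rfl⟩
      · exact Or.inl ⟨h, hl⟩
    · exact Or.inr ⟨c', hc', rfl⟩
  · rintro (⟨h, -⟩ | ⟨c', hc', rfl⟩)
    · exact Or.inl h
    · exact Or.inr ⟨c', hc', rfl⟩

lemma Gsum_eq (w u : List A) : Gsum u w = if u = w then (-1) ^ w.length else 0 := by
  induction w using List.reverseRecOn generalizing u with
  | nil =>
    rw [Gsum]
    simp only [List.sublists_nil, List.toFinset_cons, List.toFinset_nil, insert_empty_eq,
      Finset.sum_singleton, wordNE_nil, List.length_nil, pow_zero, one_mul]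
    split_ifs <;> simp
  | append_singleton v a ih =>
    have hdisj : Disjoint (v.sublists.toFinset.filter (fun c => ¬ c.getLast? = some a))
        (v.sublists.toFinset.image (· ++ [a])) := by
      rw [Finset.disjoint_left]
      rintro c hc1 hc2
      rw [Finset.mem_filter] at hc1
      rw [Finset.mem_image] at hc2
      obtain ⟨c', -, rfl⟩ := hc2
      exact hc1.2 (List.getLast?_concat)
    have hinj : ∀ x ∈ v.sublists.toFinset, ∀ y ∈ v.sublists.toFinset,
        x ++ [a] = y ++ [a] → x = y := fun x _ y _ h => List.append_cancel_right h
    rw [Gsum, sublists_toFinset_concat, Finset.sum_union hdisj, Finset.sum_image hinj]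
    have key : ∀ x ∈ v.sublists.toFinset,
        (-1 : ℤ) ^ (x ++ [a]).length * (wordNE u (x ++ [a]) : ℤ)
          = -(if u.getLast? = some a then (-1) ^ x.length * (wordNE u.dropLast x : ℤ) else 0)
            - (if ¬ x.getLast? = some a then (-1) ^ x.length * (wordNE u x : ℤ) else 0) := by
      intro x hx
      rw [wordNE_concat, List.length_append]
      push_cast
      rw [ite_not]
      split_ifs <;> simp <;> ring
    rw [Finset.sum_congr rfl key, Finset.sum_filter, ← Finset.sum_add_distrib]
    have key2 : ∀ x ∈ v.sublists.toFinset,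
        ((if ¬ x.getLast? = some a then (-1 : ℤ) ^ x.length * (wordNE u x : ℤ) else 0) +
          (-(if u.getLast? = some a then (-1) ^ x.length * (wordNE u.dropLast x : ℤ) else 0)
            - (if ¬ x.getLast? = some a then (-1) ^ x.length * (wordNE u x : ℤ) else 0)))
          = -(if u.getLast? = some a then (-1) ^ x.length * (wordNE u.dropLast x : ℤ) else 0) :=
      fun x _ => by ring
    rw [Finset.sum_congr rfl key2]
    by_cases hu : u.getLast? = some a
    · simp only [if_pos hu]
      rw [Finset.sum_neg_distrib, ← Gsum, ih]
      obtain ⟨u'', rfl⟩ := List.getLast?_eq_some_iff.1 hu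
      rw [List.dropLast_concat]
      have hiff : (u'' ++ [a] = v ++ [a]) ↔ u'' = v :=
        ⟨List.append_cancel_right, fun h => h ▸ rfl⟩
      by_cases h : u'' = v
      · rw [if_pos h, if_pos (hiff.2 h), List.length_append]
        simp [pow_succ]
      · rw [if_neg h, if_neg (fun hh => h (hiff.1 hh)), neg_zero]
    · simp only [if_neg hu, neg_zero, Finset.sum_const_zero]
      rw [if_neg]
      intro h
      rw [h, List.getLast?_concat] at hu
      exact hu rfl

end BjornerAux

/-- **Björner's theorem on subword order.** For words `u ≤ w` in subword
order, `μ(u,w) = (−1)^{|w|−|u|} · NE(u,w)`. The Möbius function `mu` of subword order is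
characterised by its defining recurrence. -/
theorem stmt4 {A : Type*} (mu : List A → List A → ℤ)
    (hmu_self : ∀ u : List A, mu u u = 1)
    (hmu_rec : ∀ u w : List A, u.Sublist w → u ≠ w →
      ∑ c ∈ w.sublists.toFinset.filter (fun c => u.Sublist c), mu u c = 0)
    (u w : List A) (huw : u.Sublist w) :
    mu u w = (-1) ^ (w.length - u.length) * (wordNE u w : ℤ) := by
  classical
  have sign : ∀ k m : ℕ, k ≤ m → ((-1 : ℤ)) ^ (m - k) = (-1) ^ m * (-1) ^ k := by
    intro k m h
    obtain ⟨d, rfl⟩ := Nat.exists_eq_add_of_le h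
    have h2 : (-1 : ℤ) ^ k * (-1) ^ k = 1 := by
      rw [← pow_add, ← two_mul, pow_mul]
      norm_num
    rw [show k + d - k = d from by omega, pow_add,
      mul_comm ((-1 : ℤ) ^ k) ((-1 : ℤ) ^ d), mul_assoc, h2, mul_one]
  suffices H : ∀ n : ℕ, ∀ w : List A, w.length ≤ n → ∀ u, u.Sublist w →
      mu u w = (-1) ^ (w.length - u.length) * (wordNE u w : ℤ) from
    H w.length w le_rfl u huw
  intro n
  induction n with
  | zero =>
    intro w hw u hu
    have hwnil : w = [] := List.length_eq_zero_iff.1 (Nat.le_zero.1 hw)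
    subst hwnil
    have hunil : u = [] := List.sublist_nil.1 hu
    subst hunil
    rw [hmu_self]
    simp [wordNE_self]
  | succ n ih =>
    intro w hw u hu
    by_cases hne : u = w
    · subst hne
      rw [hmu_self]
      simp [wordNE_self]
    · have hrec := hmu_rec u w hu hne
      set F := w.sublists.toFinset.filter (fun c => u.Sublist c) with hF
      have hwF : w ∈ F := by
        rw [hF, Finset.mem_filter, List.mem_toFinset, List.mem_sublists]
        exact ⟨List.Sublist.refl w, hu⟩
      have hGs : ∑ c ∈ F, (-1 : ℤ) ^ (c.length - u.length) * (wordNE u c : ℤ) = 0 := by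
        have h1 : ∀ c ∈ F, (-1 : ℤ) ^ (c.length - u.length) * (wordNE u c : ℤ)
            = (-1) ^ u.length * ((-1) ^ c.length * (wordNE u c : ℤ)) := by
          intro c hc
          rw [hF, Finset.mem_filter] at hc
          rw [sign u.length c.length hc.2.length_le]
          ring
        rw [Finset.sum_congr rfl h1, ← Finset.mul_sum]
        have h2 : ∑ c ∈ F, (-1 : ℤ) ^ c.length * (wordNE u c : ℤ)
            = ∑ c ∈ w.sublists.toFinset, (-1 : ℤ) ^ c.length * (wordNE u c : ℤ) := by
          rw [hF, Finset.sum_filter]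
          apply Finset.sum_congr rfl
          intro c hc
          by_cases h : u.Sublist c
          · rw [if_pos h]
          · rw [if_neg h, wordNE_of_not_sublist h, Nat.cast_zero, mul_zero]
        rw [h2, ← Gsum, Gsum_eq, if_neg hne, mul_zero]
      have hmuErase : ∀ c ∈ F.erase w,
          mu u c = (-1 : ℤ) ^ (c.length - u.length) * (wordNE u c : ℤ) := by
        intro c hc
        rw [Finset.mem_erase] at hc
        obtain ⟨hcw, hcF⟩ := hc
        rw [hF, Finset.mem_filter, List.mem_toFinset, List.mem_sublists] at hcF
        have hle : c.length ≤ w.length := hcF.1.length_le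
        have hlt : c.length < w.length := by
          rcases Nat.lt_or_ge c.length w.length with h | h
          · exact h
          · exact absurd (hcF.1.eq_of_length (le_antisymm hle h)) hcw
        exact ih c (by omega) u hcF.2
      have e1 := Finset.add_sum_erase F (fun c => mu u c) hwF
      have e2 := Finset.add_sum_erase F
        (fun c => (-1 : ℤ) ^ (c.length - u.length) * (wordNE u c : ℤ)) hwF
      rw [hrec] at e1
      rw [hGs] at e2
      have heq : ∑ c ∈ F.erase w, mu u c
          = ∑ c ∈ F.erase w, (-1 : ℤ) ^ (c.length - u.length) * (wordNE u c : ℤ) :=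
        Finset.sum_congr rfl hmuErase
      linarith [e1, e2, heq]
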